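/- Let A, B, C, D ∈ ℂ^{n×n} and define 𝓐₋₁ = [[0, C],[0, A]], 𝓐₀ = [[D, Cᵀ],[−B, Dᵀ]], 𝓐₁ = [[Aᵀ, 0],[−Bᵀ, 0]] (2×2 block form with n×n blocks). Suppose S ∈ ℂ^{n×n} satisfies DS + SᵀA − SᵀBS + C = 0 and that Dᵀ − BᵀS is invertible, and set W = −(Dᵀ − BᵀS)⁻¹(A − BS) and G = [[0, S],[0, W]]. Then 𝓐₋₁ + 𝓐₀G + 𝓐₁G² = 0; moreover, the spectral radius of G equals the spectral radius of W, so if the spectral radius of W is less than 1 then G is a solution of the quadratic matrix equation with spectral radius less than 1. -/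

import Mathlib

open scoped Matrix

/-- if `S` solves the ⊤-NARE `D S + Sᵀ A − Sᵀ B S + C = 0` and
`Dᵀ − Bᵀ S` is invertible, then with `W = −(Dᵀ − Bᵀ S)⁻¹ (A − B S)` and
`G = [[0, S], [0, W]]` one has `𝓐₋₁ + 𝓐₀ G + 𝓐₁ G² = 0` and the spectral radius of
`G` equals that of `W`; hence if the spectral radius of `W` is less than one, `G` is
a solution of the quadratic matrix equation with spectral radius less than one. -/
theorem tNARE_solution_gives_quadratic_solution
    (n : ℕ) (A B C D : Matrix (Fin n) (Fin n) ℂ)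
    (S : Matrix (Fin n) (Fin n) ℂ)
    (hS : D * S + Sᵀ * A - Sᵀ * B * S + C = 0)
    (hinv : IsUnit (Dᵀ - Bᵀ * S)) :
    ∀ W : Matrix (Fin n) (Fin n) ℂ,
      W = -(Dᵀ - Bᵀ * S)⁻¹ * (A - B * S) →
      ∀ Am1 A0 A1 G : Matrix (Fin n ⊕ Fin n) (Fin n ⊕ Fin n) ℂ,
        Am1 = Matrix.fromBlocks 0 C 0 A →
        A0 = Matrix.fromBlocks D Cᵀ (-B) Dᵀ →
        A1 = Matrix.fromBlocks Aᵀ 0 (-Bᵀ) 0 →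
        G = Matrix.fromBlocks 0 S 0 W →
        Am1 + A0 * G + A1 * G ^ 2 = 0 ∧
        spectralRadius ℂ G = spectralRadius ℂ W ∧
        (spectralRadius ℂ W < 1 →
          Am1 + A0 * G + A1 * G ^ 2 = 0 ∧ spectralRadius ℂ G < 1) := by
  intro W hW Am1 A0 A1 G hAm1 hA0 hA1 hG
  have hdet : IsUnit (Dᵀ - Bᵀ * S).det := (Matrix.isUnit_iff_isUnit_det _).mp hinv
  have key1 : (Dᵀ - Bᵀ * S) * W = -(A - B * S) := by
    rw [hW, neg_mul, mul_neg, ← Matrix.mul_assoc, Matrix.mul_nonsing_inv _ hdet, Matrix.one_mul]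
  -- Part 1: the quadratic matrix equation
  have part1 : Am1 + A0 * G + A1 * G ^ 2 = 0 := by
    have hT : Sᵀ * Dᵀ + Aᵀ * S - Sᵀ * Bᵀ * S + Cᵀ = 0 := by
      have := congrArg Matrix.transpose hS
      simpa [Matrix.transpose_add, Matrix.transpose_sub, Matrix.transpose_mul,
        Matrix.mul_assoc] using this
    have key2 : Cᵀ * W + Aᵀ * (S * W) = Sᵀ * A - Sᵀ * B * S := by
      have h2 : Cᵀ + Aᵀ * S = -(Sᵀ * (Dᵀ - Bᵀ * S)) := by
        rw [Matrix.mul_sub, ← Matrix.mul_assoc]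
        linear_combination (norm := (abel_nf; try rfl)) hT
      calc Cᵀ * W + Aᵀ * (S * W) = (Cᵀ + Aᵀ * S) * W := by
            rw [Matrix.add_mul, Matrix.mul_assoc]
        _ = -(Sᵀ * ((Dᵀ - Bᵀ * S) * W)) := by rw [h2, Matrix.neg_mul, Matrix.mul_assoc]
        _ = Sᵀ * (A - B * S) := by rw [key1, mul_neg, neg_neg]
        _ = Sᵀ * A - Sᵀ * B * S := by rw [Matrix.mul_sub, Matrix.mul_assoc]
    have key3 : Dᵀ * W + -Bᵀ * (S * W) = -(A - B * S) := by
      rw [← key1, Matrix.sub_mul, Matrix.neg_mul, Matrix.mul_assoc, sub_eq_add_neg]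
    rw [hAm1, hA0, hA1, hG, pow_two, Matrix.fromBlocks_multiply, Matrix.fromBlocks_multiply,
      Matrix.fromBlocks_multiply, Matrix.fromBlocks_add, Matrix.fromBlocks_add]
    have b12 : C + (D * S + Cᵀ * W) + (Aᵀ * (S * W) + 0 * (W * W)) = 0 := by
      rw [Matrix.zero_mul, add_zero]
      linear_combination (norm := (abel_nf; try rfl)) hS + key2
    have b22 : A + (-B * S + Dᵀ * W) + (-Bᵀ * (S * W) + 0 * (W * W)) = 0 := by
      rw [Matrix.zero_mul, add_zero, Matrix.neg_mul]
      have h : A + (-(B * S) + Dᵀ * W) + -Bᵀ * (S * W)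
          = (A - B * S) + (Dᵀ * W + -Bᵀ * (S * W)) := by abel
      rw [h, key3, add_neg_cancel]
    simp only [Matrix.zero_mul, Matrix.mul_zero, add_zero, zero_add] at b12 b22 ⊢
    rw [b12, b22]
    simp
  -- Part 2: spectral radii
  have part2 : spectralRadius ℂ G = spectralRadius ℂ W := by
    have hspec : spectrum ℂ G = spectrum ℂ W ∪ {z : ℂ | z ^ n = 0} := by
      ext z
      have h1 : (algebraMap ℂ (Matrix (Fin n ⊕ Fin n) (Fin n ⊕ Fin n) ℂ)) z - G
          = Matrix.fromBlocks (z • (1 : Matrix (Fin n) (Fin n) ℂ)) (-S) 0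
              (z • (1 : Matrix (Fin n) (Fin n) ℂ) - W) := by
        rw [hG, Algebra.algebraMap_eq_smul_one, ← Matrix.fromBlocks_one, Matrix.fromBlocks_smul,
          sub_eq_add_neg, Matrix.fromBlocks_neg, Matrix.fromBlocks_add]
        simp [sub_eq_add_neg]
      have h2 : (algebraMap ℂ (Matrix (Fin n) (Fin n) ℂ)) z - W
          = z • (1 : Matrix (Fin n) (Fin n) ℂ) - W := by
        rw [Algebra.algebraMap_eq_smul_one]
      simp only [spectrum.mem_iff, h1, h2, Matrix.isUnit_iff_isUnit_det,
        Matrix.det_fromBlocks_zero₂₁, Matrix.det_smul, Matrix.det_one, mul_one,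
        Fintype.card_fin, isUnit_iff_ne_zero, not_not, mul_eq_zero,
        Set.mem_union, Set.mem_setOf_eq]
      tauto
    rw [spectralRadius, spectralRadius, hspec, iSup_union]
    have h0 : (⨆ z ∈ {z : ℂ | z ^ n = 0}, (‖z‖₊ : ENNReal)) = 0 := by
      refine le_antisymm (iSup₂_le fun z hz => ?_) zero_le
      obtain ⟨rfl, -⟩ := pow_eq_zero_iff'.mp hz
      simp
    rw [h0, sup_of_le_left zero_le]
  exact ⟨part1, part2, fun hlt => ⟨part1, part2 ▸ hlt⟩⟩
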